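/- arXiv:1703.06807 — 2 statements merged into one kernel-verified Lean document; each statement's English description precedes it below -/
import Mathlib

section
/- Let f_1, …, f_n : ℝ^d → ℝ each be convex and L-smooth, let r : ℝ^d → ℝ be convex, set f = (1/n)∑_i f_i and F = f + r, and let x* be a minimizer of F. If i is drawn uniformly at random from {1, …, n}, then for every x ∈ ℝ^d: E_i[‖∇f_i(x) − ∇f_i(x*)‖²] ≤ 2L (F(x) − F(x*)). -/
open scoped RealInnerProductSpace

section Helpers

variable {E : Type*} [NormedAddCommGroup E] [InnerProductSpace ℝ E] [CompleteSpace E]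

lemma line_hasDerivAt' {f : E → ℝ} {g : E → E} (hg : ∀ z, HasGradientAt f (g z) z)
    (x v : E) (t : ℝ) :
    HasDerivAt (fun s : ℝ => f (x + s • v)) ⟪g (x + t • v), v⟫ t := by
  have h1 : HasDerivAt (fun s : ℝ => x + s • v) v t := by
    simpa using ((hasDerivAt_id t).smul_const v).const_add x
  have h2 := (hg (x + t • v)).hasFDerivAt.comp_hasDerivAt t h1
  simp [InnerProductSpace.toDual_apply_apply] at h2
  exact h2

lemma convex_first_order {f : E → ℝ} {g : E → E} (hf : ConvexOn ℝ Set.univ f)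
    (hg : ∀ z, HasGradientAt f (g z) z) (x y : E) :
    f x + ⟪g x, y - x⟫ ≤ f y := by
  set ψ : ℝ → ℝ := fun s => f (x + s • (y - x)) with hψdef
  have h0 : HasDerivAt ψ ⟪g x, y - x⟫ 0 := by
    simpa using line_hasDerivAt' hg x (y - x) 0
  rw [hasDerivAt_iff_tendsto_slope] at h0
  have h0' : Filter.Tendsto (slope ψ 0) (nhdsWithin 0 (Set.Ioi 0)) (nhds ⟪g x, y - x⟫) :=
    h0.mono_left (nhdsWithin_mono 0 (fun t ht => ne_of_gt ht))
  have hev : ∀ᶠ t in nhdsWithin (0:ℝ) (Set.Ioi 0), slope ψ 0 t ≤ f y - f x := by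
    filter_upwards [Ioc_mem_nhdsGT_of_mem (Set.left_mem_Ico.2 one_pos)] with t ht
    have hc := hf.2 (Set.mem_univ x) (Set.mem_univ y)
      (show (0:ℝ) ≤ 1 - t by linarith [ht.2]) ht.1.le (by ring)
    have he : (1 - t) • x + t • y = x + t • (y - x) := by module
    rw [he] at hc
    rw [slope_def_field]
    have hψ0 : ψ 0 = f x := by simp [hψdef]
    have : ψ t ≤ (1 - t) * f x + t * f y := by simpa [smul_eq_mul] using hc
    rw [sub_zero, div_le_iff₀ ht.1, hψ0]
    nlinarith
  have := le_of_tendsto h0' hev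
  linarith

lemma descent_lemma {f : E → ℝ} {g : E → E} (hg : ∀ z, HasGradientAt f (g z) z)
    {L : ℝ} (hL : 0 < L) (hlip : ∀ a b, ‖g a - g b‖ ≤ L * ‖a - b‖) (x v : E) :
    f (x + v) ≤ f x + ⟪g x, v⟫ + L / 2 * ‖v‖ ^ 2 := by
  set χ : ℝ → ℝ := fun t => f (x + t • v) - t * ⟪g x, v⟫ - L / 2 * t ^ 2 * ‖v‖ ^ 2 with hχdef
  have hχ : ∀ t : ℝ, HasDerivAt χ (⟪g (x + t • v), v⟫ - ⟪g x, v⟫ - L * t * ‖v‖ ^ 2) t := by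
    intro t
    have h1 := line_hasDerivAt' hg x v t
    have h2 : HasDerivAt (fun s : ℝ => s * ⟪g x, v⟫) ⟪g x, v⟫ t := by
      simpa using (hasDerivAt_id t).mul_const (⟪g x, v⟫)
    have h3 : HasDerivAt (fun s : ℝ => L / 2 * s ^ 2 * ‖v‖ ^ 2) (L * t * ‖v‖ ^ 2) t := by
      have := ((hasDerivAt_pow 2 t).const_mul (L / 2)).mul_const (‖v‖ ^ 2)
      exact this.congr_deriv (by rw [show (2:ℕ) - 1 = 1 from rfl]; push_cast; ring)
    exact (h1.sub h2).sub h3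
  have anti : AntitoneOn χ (Set.Icc 0 1) := by
    apply antitoneOn_of_deriv_nonpos (convex_Icc 0 1)
    · exact fun t _ => ((hχ t).continuousAt).continuousWithinAt
    · exact fun t _ => ((hχ t).differentiableAt).differentiableWithinAt
    · intro t ht
      rw [interior_Icc] at ht
      rw [(hχ t).deriv]
      have h1 : ⟪g (x + t • v) - g x, v⟫ ≤ ‖g (x + t • v) - g x‖ * ‖v‖ :=
        real_inner_le_norm _ _
      have h2 : ‖g (x + t • v) - g x‖ ≤ L * (t * ‖v‖) := by
        simpa [norm_smul, abs_of_pos ht.1] using hlip (x + t • v) x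
      have h3 : ⟪g (x + t • v) - g x, v⟫ = ⟪g (x + t • v), v⟫ - ⟪g x, v⟫ :=
        inner_sub_left _ _ _
      nlinarith [norm_nonneg v, norm_nonneg (g (x + t • v) - g x)]
  have h01 := anti (Set.left_mem_Icc.2 zero_le_one) (Set.right_mem_Icc.2 zero_le_one) zero_le_one
  have hχ0 : χ 0 = f x := by simp [hχdef]
  have hχ1 : χ 1 = f (x + v) - ⟪g x, v⟫ - L / 2 * ‖v‖ ^ 2 := by simp [hχdef]
  rw [hχ0, hχ1] at h01
  linarith

lemma grad_sq_le {f : E → ℝ} {g : E → E} (hf : ConvexOn ℝ Set.univ f)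
    (hg : ∀ z, HasGradientAt f (g z) z) {L : ℝ} (hL : 0 < L)
    (hlip : ∀ a b, ‖g a - g b‖ ≤ L * ‖a - b‖) (x y : E) :
    ‖g x - g y‖ ^ 2 ≤ 2 * L * (f x - f y - ⟪g y, x - y⟫) := by
  set w : E := g x - g y with hw
  have hdes := descent_lemma hg hL hlip x (-(L⁻¹ • w))
  have hfo := convex_first_order hf hg y (x + -(L⁻¹ • w))
  have e1 : ⟪g y, x + -(L⁻¹ • w) - y⟫ = ⟪g y, x - y⟫ - L⁻¹ * ⟪g y, w⟫ := by
    rw [show x + -(L⁻¹ • w) - y = (x - y) + -(L⁻¹ • w) by abel]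
    rw [inner_add_right, inner_neg_right, real_inner_smul_right]
    ring
  have e2 : ⟪g x, -(L⁻¹ • w)⟫ = -(L⁻¹ * ⟪g x, w⟫) := by
    rw [inner_neg_right, real_inner_smul_right]
  have e3 : ‖-(L⁻¹ • w)‖ ^ 2 = L⁻¹ ^ 2 * ‖w‖ ^ 2 := by
    rw [norm_neg, norm_smul]
    simp [abs_of_pos (inv_pos.2 hL), mul_pow]
  have e4 : ⟪g x, w⟫ - ⟪g y, w⟫ = ‖w‖ ^ 2 := by
    rw [← inner_sub_left, ← hw, real_inner_self_eq_norm_sq]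
  rw [e1] at hfo
  rw [e2, e3] at hdes
  have e5 : L / 2 * (L⁻¹ ^ 2 * ‖w‖ ^ 2) = L⁻¹ / 2 * ‖w‖ ^ 2 := by
    field_simp
  have e6 : L⁻¹ * ⟪g x, w⟫ - L⁻¹ * ⟪g y, w⟫ = L⁻¹ * ‖w‖ ^ 2 := by
    rw [← mul_sub, e4]
  have key : L⁻¹ / 2 * ‖w‖ ^ 2 ≤ f x - f y - ⟪g y, x - y⟫ := by linarith
  have := mul_le_mul_of_nonneg_left key (by positivity : (0:ℝ) ≤ 2 * L)
  have e7 : 2 * L * (L⁻¹ / 2 * ‖w‖ ^ 2) = ‖w‖ ^ 2 := by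
    field_simp
  linarith

end Helpers

theorem expected_gradient_gap_bound {d n : ℕ} (hn : 0 < n) (L : ℝ) (hL : 0 < L)
    (f : Fin n → EuclideanSpace ℝ (Fin d) → ℝ)
    (f' : Fin n → EuclideanSpace ℝ (Fin d) → EuclideanSpace ℝ (Fin d))
    (r : EuclideanSpace ℝ (Fin d) → ℝ)
    (hgrad : ∀ i x, HasGradientAt (f i) (f' i x) x)
    (hfconv : ∀ i, ConvexOn ℝ Set.univ (f i))
    (hsmooth : ∀ i x y, ‖f' i x - f' i y‖ ≤ L * ‖x - y‖)
    (hrconv : ConvexOn ℝ Set.univ r)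
    (F : EuclideanSpace ℝ (Fin d) → ℝ)
    (hF : ∀ x, F x = (n : ℝ)⁻¹ * ∑ i, f i x + r x)
    (xstar : EuclideanSpace ℝ (Fin d)) (hmin : ∀ x, F xstar ≤ F x) :
    ∀ x, (n : ℝ)⁻¹ * ∑ i, ‖f' i x - f' i xstar‖ ^ 2 ≤ 2 * L * (F x - F xstar) := by
  intro x
  set Δ : EuclideanSpace ℝ (Fin d) := x - xstar with hΔ
  -- per-summand cocoercivity bound
  have hkey : ∀ i, ‖f' i x - f' i xstar‖ ^ 2 ≤
      2 * L * (f i x - f i xstar - ⟪f' i xstar, Δ⟫) :=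
    fun i => grad_sq_le (hfconv i) (hgrad i) hL (hsmooth i) x xstar
  -- first-order optimality through r
  have hrstep : 0 ≤ (n : ℝ)⁻¹ * ∑ i, ⟪f' i xstar, Δ⟫ + (r x - r xstar) := by
    set ψ : ℝ → ℝ := fun t => (n : ℝ)⁻¹ * ∑ i, f i (xstar + t • Δ) with hψdef
    have hψ : ∀ t : ℝ, HasDerivAt ψ ((n : ℝ)⁻¹ * ∑ i, ⟪f' i (xstar + t • Δ), Δ⟫) t := by
      intro t
      exact (HasDerivAt.fun_sum fun i _ => line_hasDerivAt' (hgrad i) xstar Δ t).const_mul _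
    have h0 : HasDerivAt ψ ((n : ℝ)⁻¹ * ∑ i, ⟪f' i xstar, Δ⟫) 0 := by
      simpa using hψ 0
    rw [hasDerivAt_iff_tendsto_slope] at h0
    have h0' : Filter.Tendsto (slope ψ 0) (nhdsWithin 0 (Set.Ioi 0))
        (nhds ((n : ℝ)⁻¹ * ∑ i, ⟪f' i xstar, Δ⟫)) :=
      h0.mono_left (nhdsWithin_mono 0 (fun t ht => ne_of_gt ht))
    have hψ0 : ψ 0 = (n : ℝ)⁻¹ * ∑ i, f i xstar := by simp [hψdef]
    have hev : ∀ᶠ t in nhdsWithin (0:ℝ) (Set.Ioi 0),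
        -(r x - r xstar) ≤ slope ψ 0 t := by
      filter_upwards [Ioc_mem_nhdsGT_of_mem (Set.left_mem_Ico.2 one_pos)] with t ht
      have hmin' := hmin (xstar + t • Δ)
      rw [hF, hF] at hmin'
      have hc := hrconv.2 (Set.mem_univ xstar) (Set.mem_univ x)
        (show (0:ℝ) ≤ 1 - t by linarith [ht.2]) ht.1.le (by ring)
      have he : (1 - t) • xstar + t • x = xstar + t • Δ := by rw [hΔ]; module
      rw [he] at hc
      have hc' : r (xstar + t • Δ) ≤ (1 - t) * r xstar + t * r x := by
        simpa [smul_eq_mul] using hc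
      rw [slope_def_field, sub_zero, le_div_iff₀ ht.1, hψ0]
      have : ψ t = (n : ℝ)⁻¹ * ∑ i, f i (xstar + t • Δ) := rfl
      nlinarith
    have := ge_of_tendsto h0' hev
    linarith
  -- combine
  have hsum : ∑ i, ‖f' i x - f' i xstar‖ ^ 2 ≤
      ∑ i, 2 * L * (f i x - f i xstar - ⟪f' i xstar, Δ⟫) :=
    Finset.sum_le_sum fun i _ => hkey i
  have hne : (0:ℝ) ≤ (n : ℝ)⁻¹ := by positivity
  have h1 := mul_le_mul_of_nonneg_left hsum hne
  have e : ∑ i, 2 * L * (f i x - f i xstar - ⟪f' i xstar, Δ⟫) =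
      2 * L * ((∑ i, f i x) - (∑ i, f i xstar) - ∑ i, ⟪f' i xstar, Δ⟫) := by
    rw [← Finset.mul_sum, Finset.sum_sub_distrib, Finset.sum_sub_distrib]
  rw [e] at h1
  have h2 := mul_le_mul_of_nonneg_left
    (show -(r x - r xstar) ≤ (n : ℝ)⁻¹ * ∑ i, ⟪f' i xstar, Δ⟫ by linarith)
    (by positivity : (0:ℝ) ≤ 2 * L)
  rw [hF x, hF xstar]
  nlinarith [h1, h2]
end

section
/- Let f_1, …, f_n : ℝ^d → ℝ be convex and L-smooth, r convex, F = (1/n)∑_i f_i + r with minimizer x*. Fix points x, x̃ ∈ ℝ^d and let i be uniform on {1, …, n}. Define the SVRG gradient estimator p_i = ∇f_i(x) − ∇f_i(x̃) + ∇f(x̃) where f = (1/n)∑_j f_j. Then E_i[‖p_i − ∇f(x)‖²] ≤ 4L (F(x) − F(x*) + F(x̃) − F(x*)). -/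
open scoped RealInnerProductSpace

section aux
variable {E : Type*} [NormedAddCommGroup E] [InnerProductSpace ℝ E] [CompleteSpace E]

lemma aux_line_deriv {h : E → ℝ} {h' : E → E} (hg : ∀ z, HasGradientAt h (h' z) z)
    (a v : E) (t : ℝ) :
    HasDerivAt (fun s : ℝ => h (a + s • v)) ⟪h' (a + t • v), v⟫ t := by
  have hline : HasDerivAt (fun s : ℝ => a + s • v) v t := by
    simpa using ((hasDerivAt_id t).smul_const v).const_add a
  have hf : HasFDerivAt h (InnerProductSpace.toDual ℝ E (h' (a + t • v))) (a + t • v) :=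
    hasGradientAt_iff_hasFDerivAt.mp (hg _)
  have := hf.comp_hasDerivAt t hline
  simp only [Function.comp_def, InnerProductSpace.toDual_apply_apply] at this
  exact this

end aux

section aux2
variable {E : Type*} [NormedAddCommGroup E] [InnerProductSpace ℝ E] [CompleteSpace E]

lemma aux_grad_convex_ineq {h : E → ℝ} {h' : E → E} (hconv : ConvexOn ℝ Set.univ h)
    (hg : ∀ z, HasGradientAt h (h' z) z) (u w : E) :
    h u + ⟪h' u, w - u⟫ ≤ h w := by
  set g : ℝ → ℝ := fun t => h (u + t • (w - u)) with hgdef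
  have gconv : ConvexOn ℝ Set.univ g := by
    have := hconv.comp_affineMap (AffineMap.lineMap u w : ℝ →ᵃ[ℝ] E)
    have heq : (h ∘ (AffineMap.lineMap u w : ℝ →ᵃ[ℝ] E)) = g := by
      funext t
      simp [hgdef, AffineMap.lineMap_apply, add_comm]
    rw [heq] at this
    simpa using this
  have hder : HasDerivAt g ⟪h' u, w - u⟫ 0 := by
    have := aux_line_deriv hg u (w - u) 0
    simpa using this
  have := gconv.le_slope_of_hasDerivAt (Set.mem_univ (0:ℝ)) (Set.mem_univ 1)
    zero_lt_one hder
  rw [slope_def_field] at this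
  have hg0 : g 0 = h u := by simp [hgdef]
  have hg1 : g 1 = h w := by simp [hgdef]
  rw [hg0, hg1] at this
  simp at this
  linarith
end aux2

section aux3
variable {E : Type*} [NormedAddCommGroup E] [InnerProductSpace ℝ E] [CompleteSpace E]

lemma aux_descent {h : E → ℝ} {h' : E → E} {L : ℝ} (hL : 0 < L)
    (hg : ∀ z, HasGradientAt h (h' z) z)
    (hlip : ∀ a b, ‖h' a - h' b‖ ≤ L * ‖a - b‖) (a b : E) :
    h b ≤ h a + ⟪h' a, b - a⟫ + L / 2 * ‖b - a‖ ^ 2 := by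
  set v := b - a with hv
  set g : ℝ → ℝ := fun t => h (a + t • v) - t * ⟪h' a, v⟫ - L / 2 * ‖v‖ ^ 2 * t ^ 2 with hgdef
  have hderiv : ∀ t : ℝ, HasDerivAt g
      (⟪h' (a + t • v), v⟫ - ⟪h' a, v⟫ - L * ‖v‖ ^ 2 * t) t := by
    intro t
    have h1 := aux_line_deriv hg a v t
    have h2 : HasDerivAt (fun s : ℝ => s * ⟪h' a, v⟫) ⟪h' a, v⟫ t := by
      simpa using (hasDerivAt_id t).mul_const ⟪h' a, v⟫
    have h3 : HasDerivAt (fun s : ℝ => L / 2 * ‖v‖ ^ 2 * s ^ 2) (L * ‖v‖ ^ 2 * t) t := by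
      have := (hasDerivAt_pow 2 t).const_mul (L / 2 * ‖v‖ ^ 2)
      exact this.congr_deriv (by norm_num; ring)
    exact (h1.sub h2).sub h3
  have hmono : AntitoneOn g (Set.Icc 0 1) := by
    apply antitoneOn_of_deriv_nonpos (convex_Icc 0 1)
    · exact fun t _ => ((hderiv t).differentiableAt.continuousAt).continuousWithinAt
    · exact fun t _ => (hderiv t).differentiableAt.differentiableWithinAt
    · intro t ht
      rw [interior_Icc] at ht
      rw [(hderiv t).deriv]
      have hip : ⟪h' (a + t • v), v⟫ - ⟪h' a, v⟫ = ⟪h' (a + t • v) - h' a, v⟫ := by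
        rw [inner_sub_left]
      rw [hip]
      have h1 : ⟪h' (a + t • v) - h' a, v⟫ ≤ ‖h' (a + t • v) - h' a‖ * ‖v‖ :=
        real_inner_le_norm _ _
      have h2 : ‖h' (a + t • v) - h' a‖ ≤ L * ‖t • v‖ := by
        have := hlip (a + t • v) a
        simpa using this
      have h3 : ‖t • v‖ = t * ‖v‖ := by
        rw [norm_smul, Real.norm_eq_abs, abs_of_pos ht.1]
      have h4 := mul_le_mul_of_nonneg_right h2 (norm_nonneg v)
      rw [h3] at h4
      nlinarith [h1, h4]
  have h01 := hmono (Set.left_mem_Icc.mpr zero_le_one) (Set.right_mem_Icc.mpr zero_le_one)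
    zero_le_one
  have hg0 : g 0 = h a := by simp [hgdef]
  have hg1 : g 1 = h b - ⟪h' a, v⟫ - L / 2 * ‖v‖ ^ 2 := by simp [hgdef, hv]
  rw [hg0, hg1] at h01
  linarith
end aux3

section aux4
variable {E : Type*} [NormedAddCommGroup E] [InnerProductSpace ℝ E] [CompleteSpace E]

lemma aux_key {h : E → ℝ} {h' : E → E} {L : ℝ} (hL : 0 < L)
    (hconv : ConvexOn ℝ Set.univ h)
    (hg : ∀ z, HasGradientAt h (h' z) z)
    (hlip : ∀ a b, ‖h' a - h' b‖ ≤ L * ‖a - b‖) (y z : E) :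
    ‖h' y - h' z‖ ^ 2 ≤ 2 * L * (h y - h z - ⟪h' z, y - z⟫) := by
  set c := h' z with hc
  set φ : E → ℝ := fun w => h w - ⟪c, w⟫ with hφ
  set φ' : E → E := fun w => h' w - c with hφ'
  have hφg : ∀ w, HasGradientAt φ (φ' w) w := by
    intro w
    have h1 : HasFDerivAt h (InnerProductSpace.toDual ℝ E (h' w)) w :=
      hasGradientAt_iff_hasFDerivAt.mp (hg w)
    have h2 : HasFDerivAt (fun u : E => ⟪c, u⟫) (InnerProductSpace.toDual ℝ E c) w := by
      have heq : (fun u : E => ⟪c, u⟫) = ⇑(InnerProductSpace.toDual ℝ E c) := by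
        funext u; simp
      rw [heq]
      exact (InnerProductSpace.toDual ℝ E c).hasFDerivAt
    rw [hasGradientAt_iff_hasFDerivAt]
    have := h1.sub h2
    exact this.congr_fderiv (by simp [φ', map_sub])
  have hφconv : ConvexOn ℝ Set.univ φ := by
    refine ⟨convex_univ, ?_⟩
    intro u _ w _ α β hα hβ hab
    have := hconv.2 (Set.mem_univ u) (Set.mem_univ w) hα hβ hab
    simp only [smul_eq_mul] at this
    simp only [hφ, smul_eq_mul, inner_add_right, real_inner_smul_right]
    linarith
  have hmin : ∀ w, φ z ≤ φ w := by
    intro w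
    have := aux_grad_convex_ineq hφconv hφg z w
    have hz : φ' z = 0 := by simp [hφ', hc]
    rw [hz] at this
    simpa using this
  have hφlip : ∀ a b, ‖φ' a - φ' b‖ ≤ L * ‖a - b‖ := by
    intro a b
    have : φ' a - φ' b = h' a - h' b := by simp only [hφ']; abel
    rw [this]; exact hlip a b
  set w := y - L⁻¹ • φ' y with hw
  have hdesc := aux_descent hL hφg hφlip y w
  have hmw := hmin w
  have hba : w - y = -(L⁻¹ • φ' y) := by rw [hw]; abel
  rw [hba] at hdesc
  have e1 : ⟪φ' y, -(L⁻¹ • φ' y)⟫ = -(L⁻¹ * ‖φ' y‖ ^ 2) := by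
    rw [inner_neg_right, real_inner_smul_right, real_inner_self_eq_norm_sq]
  have e2 : ‖-(L⁻¹ • φ' y)‖ ^ 2 = L⁻¹ ^ 2 * ‖φ' y‖ ^ 2 := by
    rw [norm_neg, norm_smul, Real.norm_eq_abs, abs_of_pos (inv_pos.mpr hL), mul_pow]
  rw [e1, e2] at hdesc
  have hLinv : L * L⁻¹ = 1 := mul_inv_cancel₀ (ne_of_gt hL)
  have hφdiff : φ y - φ z = h y - h z - ⟪h' z, y - z⟫ := by
    simp only [hφ, hc]
    rw [inner_sub_right]
    ring
  have hfin : ‖φ' y‖ ^ 2 ≤ 2 * L * (φ y - φ z) := by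
    have h5 := hmw.trans hdesc
    have h6 := mul_le_mul_of_nonneg_left h5 (by positivity : (0:ℝ) ≤ 2 * L)
    have e3 : 2 * L * (φ y + -(L⁻¹ * ‖φ' y‖ ^ 2) + L / 2 * (L⁻¹ ^ 2 * ‖φ' y‖ ^ 2))
        = 2 * L * φ y - ‖φ' y‖ ^ 2 := by
      field_simp
      ring
    rw [e3] at h6
    linarith
  have : φ' y = h' y - h' z := by simp [hφ', hc]
  rw [this] at hfin
  rw [hφdiff] at hfin
  exact hfin
end aux4

section aux5
variable {E : Type*} [NormedAddCommGroup E] [InnerProductSpace ℝ E] [CompleteSpace E]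

lemma aux_opt {h : E → ℝ} {h' : E → E} (hg : ∀ z, HasGradientAt h (h' z) z)
    {r : E → ℝ} (hrconv : ConvexOn ℝ Set.univ r)
    {xstar : E} (hmin : ∀ w, h xstar + r xstar ≤ h w + r w) (y : E) :
    r xstar - r y ≤ ⟪h' xstar, y - xstar⟫ := by
  set v := y - xstar with hv
  set g : ℝ → ℝ := fun s => h (xstar + s • v) with hgdef
  have hder : HasDerivAt g ⟪h' xstar, v⟫ 0 := by
    have := aux_line_deriv hg xstar v 0
    simpa using this
  rw [hasDerivAt_iff_tendsto_slope] at hder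
  have hmem : Set.Ioc (0:ℝ) 1 ∈ nhdsWithin (0:ℝ) (Set.Ioi 0) :=
    Ioc_mem_nhdsGT_of_mem ⟨le_refl 0, zero_lt_one⟩
  have htend : Filter.Tendsto (slope g 0) (nhdsWithin (0:ℝ) (Set.Ioi 0)) (nhds ⟪h' xstar, v⟫) :=
    hder.mono_left (nhdsWithin_mono 0 (fun t ht => ne_of_gt ht))
  refine ge_of_tendsto htend ?_
  filter_upwards [hmem] with t ht
  obtain ⟨ht0, ht1⟩ := ht
  have hconv := hrconv.2 (Set.mem_univ xstar) (Set.mem_univ y)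
    (by linarith : (0:ℝ) ≤ 1 - t) ht0.le (by ring)
  have hpt : (1 - t) • xstar + t • y = xstar + t • v := by
    simp only [hv]
    module
  rw [hpt] at hconv
  have hF := hmin (xstar + t • v)
  have hg0 : g 0 = h xstar := by simp [hgdef]
  rw [slope_def_field, hg0]
  rw [le_div_iff₀ (by linarith : (0:ℝ) < t - 0)]
  simp only [smul_eq_mul] at hconv
  have : g t = h (xstar + t • v) := rfl
  nlinarith [hF, hconv]
end aux5

theorem svrg_variance_bound {d n : ℕ} (hn : 0 < n) (L : ℝ) (hL : 0 < L)
    (f : Fin n → EuclideanSpace ℝ (Fin d) → ℝ)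
    (f' : Fin n → EuclideanSpace ℝ (Fin d) → EuclideanSpace ℝ (Fin d))
    (r : EuclideanSpace ℝ (Fin d) → ℝ)
    (hgrad : ∀ i x, HasGradientAt (f i) (f' i x) x)
    (hfconv : ∀ i, ConvexOn ℝ Set.univ (f i))
    (hsmooth : ∀ i x y, ‖f' i x - f' i y‖ ≤ L * ‖x - y‖)
    (hrconv : ConvexOn ℝ Set.univ r)
    (F : EuclideanSpace ℝ (Fin d) → ℝ)
    (hF : ∀ x, F x = (n : ℝ)⁻¹ * ∑ i, f i x + r x)
    (xstar : EuclideanSpace ℝ (Fin d)) (hmin : ∀ x, F xstar ≤ F x)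
    (x xt : EuclideanSpace ℝ (Fin d))
    (gradf : EuclideanSpace ℝ (Fin d) → EuclideanSpace ℝ (Fin d))
    (hgradf : ∀ z, gradf z = (n : ℝ)⁻¹ • ∑ j, f' j z)
    (p : Fin n → EuclideanSpace ℝ (Fin d))
    (hp : ∀ i, p i = f' i x - f' i xt + gradf xt) :
    (n : ℝ)⁻¹ * ∑ i, ‖p i - gradf x‖ ^ 2 ≤
      4 * L * (F x - F xstar + F xt - F xstar) := by
  have hn0 : (0:ℝ) < (n:ℝ) := by exact_mod_cast hn
  have hninv : (0:ℝ) ≤ (n:ℝ)⁻¹ := inv_nonneg.mpr hn0.le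
  set S : EuclideanSpace ℝ (Fin d) → ℝ := fun w => (n:ℝ)⁻¹ * ∑ i, f i w with hS
  have hSg : ∀ z, HasGradientAt S (gradf z) z := by
    intro z
    rw [hasGradientAt_iff_hasFDerivAt]
    have hsum : HasFDerivAt (fun w : EuclideanSpace ℝ (Fin d) => ∑ i, f i w)
        (∑ i, InnerProductSpace.toDual ℝ (EuclideanSpace ℝ (Fin d)) (f' i z)) z :=
      HasFDerivAt.fun_sum (fun i _ => hasGradientAt_iff_hasFDerivAt.mp (hgrad i z))
    have := hsum.const_mul ((n:ℝ)⁻¹)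
    exact this.congr_fderiv (by rw [hgradf]; simp [map_smul, map_sum])
  have hFmin' : ∀ w, S xstar + r xstar ≤ S w + r w := by
    intro w
    have := hmin w
    rw [hF, hF] at this
    exact this
  have hkey : ∀ (i : Fin n) (y : EuclideanSpace ℝ (Fin d)), ‖f' i y - f' i xstar‖ ^ 2 ≤
      2 * L * (f i y - f i xstar - ⟪f' i xstar, y - xstar⟫) :=
    fun i y => aux_key hL (hfconv i) (hgrad i) (fun u w => hsmooth i u w) y xstar
  have havg : ∀ y : EuclideanSpace ℝ (Fin d), (n:ℝ)⁻¹ * ∑ i, ‖f' i y - f' i xstar‖ ^ 2 ≤ 2 * L * (F y - F xstar) := by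
    intro y
    have hopt := aux_opt hSg hrconv hFmin' y
    have h1 : ∑ i, ‖f' i y - f' i xstar‖ ^ 2 ≤
        ∑ i, 2 * L * (f i y - f i xstar - ⟪f' i xstar, y - xstar⟫) :=
      Finset.sum_le_sum (fun i _ => hkey i y)
    have h2 : (n:ℝ)⁻¹ * ∑ i, ‖f' i y - f' i xstar‖ ^ 2 ≤
        (n:ℝ)⁻¹ * ∑ i, 2 * L * (f i y - f i xstar - ⟪f' i xstar, y - xstar⟫) :=
      mul_le_mul_of_nonneg_left h1 hninv
    have hinner : (n:ℝ)⁻¹ * ∑ i, ⟪f' i xstar, y - xstar⟫ = ⟪gradf xstar, y - xstar⟫ := by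
      rw [hgradf, real_inner_smul_left, ← sum_inner]
    have h3 : (n:ℝ)⁻¹ * ∑ i, 2 * L * (f i y - f i xstar - ⟪f' i xstar, y - xstar⟫)
        = 2 * L * (S y - S xstar - ⟪gradf xstar, y - xstar⟫) := by
      rw [← hinner]
      simp only [hS]
      rw [← Finset.mul_sum]
      rw [Finset.sum_sub_distrib, Finset.sum_sub_distrib]
      ring
    rw [h3] at h2
    have h4 : 2 * L * (S y - S xstar - ⟪gradf xstar, y - xstar⟫) ≤
        2 * L * (S y - S xstar + (r y - r xstar)) := by
      apply mul_le_mul_of_nonneg_left _ (by positivity : (0:ℝ) ≤ 2 * L)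
      linarith
    have h5 : F y - F xstar = S y - S xstar + (r y - r xstar) := by
      rw [hF, hF]; simp only [hS]; ring
    rw [h5]
    linarith
  -- variance reduction step
  set c : Fin n → EuclideanSpace ℝ (Fin d) := fun i => f' i x - f' i xt with hc
  set cb : EuclideanSpace ℝ (Fin d) := gradf x - gradf xt with hcb
  have hq : ∀ i, p i - gradf x = c i - cb := by
    intro i
    rw [hp i]
    simp only [hc, hcb]
    abel
  have hsumc : ∑ i, c i = (n:ℝ) • cb := by
    simp only [hc, hcb]
    rw [Finset.sum_sub_distrib, hgradf, hgradf, smul_sub, smul_smul, smul_smul,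
      mul_inv_cancel₀ (ne_of_gt hn0), one_smul, one_smul]
  have hvar : ∑ i, ‖c i - cb‖ ^ 2 ≤ ∑ i, ‖c i‖ ^ 2 := by
    have expand : ∀ i : Fin n, ‖c i - cb‖ ^ 2 = ‖c i‖ ^ 2 - 2 * ⟪c i, cb⟫ + ‖cb‖ ^ 2 :=
      fun i => norm_sub_sq_real _ _
    have e1 : ∑ i, ‖c i - cb‖ ^ 2
        = ∑ i, ‖c i‖ ^ 2 - 2 * ⟪∑ i, c i, cb⟫ + (n:ℝ) * ‖cb‖ ^ 2 := by
      rw [Finset.sum_congr rfl (fun i _ => expand i), Finset.sum_add_distrib,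
        Finset.sum_sub_distrib, ← Finset.mul_sum, ← sum_inner]
      simp [Finset.card_univ, nsmul_eq_mul]
    rw [e1, hsumc, real_inner_smul_left, real_inner_self_eq_norm_sq]
    nlinarith [sq_nonneg ‖cb‖, hn0]
  have hci : ∀ i : Fin n, ‖c i‖ ^ 2 ≤
      2 * ‖f' i x - f' i xstar‖ ^ 2 + 2 * ‖f' i xt - f' i xstar‖ ^ 2 := by
    intro i
    have h1 : c i = (f' i x - f' i xstar) - (f' i xt - f' i xstar) := by
      simp only [hc]; abel
    rw [h1]
    have h2 := norm_sub_le (f' i x - f' i xstar) (f' i xt - f' i xstar)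
    nlinarith [norm_nonneg ((f' i x - f' i xstar) - (f' i xt - f' i xstar)),
      sq_nonneg (‖f' i x - f' i xstar‖ - ‖f' i xt - f' i xstar‖)]
  calc (n:ℝ)⁻¹ * ∑ i, ‖p i - gradf x‖ ^ 2
      = (n:ℝ)⁻¹ * ∑ i, ‖c i - cb‖ ^ 2 := by
        congr 1
        exact Finset.sum_congr rfl (fun i _ => by rw [hq i])
    _ ≤ (n:ℝ)⁻¹ * ∑ i, ‖c i‖ ^ 2 := mul_le_mul_of_nonneg_left hvar hninv
    _ ≤ (n:ℝ)⁻¹ * ∑ i, (2 * ‖f' i x - f' i xstar‖ ^ 2 + 2 * ‖f' i xt - f' i xstar‖ ^ 2) :=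
        mul_le_mul_of_nonneg_left (Finset.sum_le_sum (fun i _ => hci i)) hninv
    _ = 2 * ((n:ℝ)⁻¹ * ∑ i, ‖f' i x - f' i xstar‖ ^ 2)
        + 2 * ((n:ℝ)⁻¹ * ∑ i, ‖f' i xt - f' i xstar‖ ^ 2) := by
        rw [Finset.sum_add_distrib, ← Finset.mul_sum, ← Finset.mul_sum]
        ring
    _ ≤ 2 * (2 * L * (F x - F xstar)) + 2 * (2 * L * (F xt - F xstar)) := by
        have hx := havg x
        have hxt := havg xt
        nlinarith [hx, hxt]
    _ = 4 * L * (F x - F xstar + F xt - F xstar) := by ring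
end
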